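/- Suppose (k, h) is admissible, i.e. h = h(k) satisfies 1/ψ_k ≤ h (vacuous when k = 0) and h < 1/ψ_{k+1}. Then the IDF allocation q (given by q_j = Q_j for j ≤ k and q_j = h·Q_j·ψ_j for j > k) is feasible and exhausts the quota: 0 ≤ q_j ≤ Q_j for every j = 1,…,N and Σ_{j=1}^N q_j = Q_tot. -/

import Mathlib

open Finset

theorem stmt_0 (N : ℕ) (hN : 1 ≤ N) (ψ Q : Fin N → ℝ)
    (hψ : ∀ i, 0 < ψ i) (hQpos : ∀ i, 0 < Q i)
    (Qtot : ℝ) (hQtot : 0 < Qtot)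
    (hsort : ∀ i j : Fin N, i ≤ j → ψ j ≤ ψ i)
    (hexcess : Qtot < ∑ i, Q i)
    (k : ℕ) (hk : k < N)
    (h : ℝ)
    (hh : h = (Qtot - ∑ j ∈ univ.filter (fun j : Fin N => (j : ℕ) < k), Q j) /
          (∑ j ∈ univ.filter (fun j : Fin N => k ≤ (j : ℕ)), Q j * ψ j))
    (hadm1 : 0 < k → 1 / ψ ⟨k - 1, by omega⟩ ≤ h)
    (hadm2 : h < 1 / ψ ⟨k, hk⟩)
    (q : Fin N → ℝ)
    (hq : ∀ j : Fin N, q j = if (j : ℕ) < k then Q j else h * Q j * ψ j) :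
    (∀ j, 0 ≤ q j ∧ q j ≤ Q j) ∧ ∑ j, q j = Qtot := by
  have hDpos : 0 < ∑ j ∈ univ.filter (fun j : Fin N => k ≤ (j : ℕ)), Q j * ψ j := by
    apply Finset.sum_pos
    · intro i _; exact mul_pos (hQpos i) (hψ i)
    · exact ⟨⟨k, hk⟩, by simp⟩
  have hhpos : 0 < h := by
    rcases Nat.eq_zero_or_pos k with hk0 | hk0
    · subst hk0
      rw [hh]
      apply div_pos _ hDpos
      simpa using hQtot
    · exact lt_of_lt_of_le (by exact one_div_pos.mpr (hψ _)) (hadm1 hk0)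
  constructor
  · intro j
    rw [hq j]
    split_ifs with hjk
    · exact ⟨(hQpos j).le, le_refl _⟩
    · refine ⟨(mul_pos (mul_pos hhpos (hQpos j)) (hψ j)).le, ?_⟩
      have hψk : ψ j ≤ ψ ⟨k, hk⟩ := hsort ⟨k, hk⟩ j (by
        rw [Fin.le_def]; exact le_of_not_gt hjk)
      have h2 : h * ψ ⟨k, hk⟩ < 1 := by
        have := hψ ⟨k, hk⟩
        rw [lt_div_iff₀ this] at hadm2
        linarith
      have h1 : h * ψ j < 1 :=
        lt_of_le_of_lt (mul_le_mul_of_nonneg_left hψk hhpos.le) h2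
      nlinarith [hQpos j, hψ j]
  · have hsplit : ∑ j, q j =
        (∑ j ∈ univ.filter (fun j : Fin N => (j : ℕ) < k), q j) +
        ∑ j ∈ univ.filter (fun j : Fin N => k ≤ (j : ℕ)), q j := by
      rw [← Finset.sum_filter_add_sum_filter_not univ (fun j : Fin N => (j : ℕ) < k)]
      congr 1
      apply Finset.sum_congr _ (fun _ _ => rfl)
      apply Finset.filter_congr
      intro x _; simp [not_lt]
    rw [hsplit]
    have h1 : ∑ j ∈ univ.filter (fun j : Fin N => (j : ℕ) < k), q j =
        ∑ j ∈ univ.filter (fun j : Fin N => (j : ℕ) < k), Q j := by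
      apply Finset.sum_congr rfl
      intro x hx
      rw [hq x, if_pos (by simpa using hx)]
    have h2 : ∑ j ∈ univ.filter (fun j : Fin N => k ≤ (j : ℕ)), q j =
        h * ∑ j ∈ univ.filter (fun j : Fin N => k ≤ (j : ℕ)), Q j * ψ j := by
      rw [Finset.mul_sum]
      apply Finset.sum_congr rfl
      intro x hx
      rw [hq x, if_neg (by simp at hx; omega), mul_assoc]
    rw [h1, h2, hh]
    field_simp
    ring
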